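/- Let r and d be integers with r ≥ 2 and d ≥ 2r−1. A natural number n belongs to the Castelnuovo semigroup S_{r,d} if and only if there exists k ∈ ℕ with k(d−r+1) ≤ n ≤ kd. Equivalently, the set of gaps ℕ ∖ S_{r,d} is the union over k ∈ ℕ of the open integer intervals {n ∈ ℕ : kd < n < (k+1)(d−r+1)}. -/

import Mathlib

/-- The Castelnuovo semigroup `S_{r,d}`: the additive submonoid of ℕ generated by
the interval of integers `{d-r+1, …, d}`. -/
def castelnuovoSemigroup (r d : ℕ) : AddSubmonoid ℕ :=
  AddSubmonoid.closure (Set.Icc (d - r + 1) d)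

lemma castelnuovo_mem_iff (r d : ℕ) (hle : d - r + 1 ≤ d) (n : ℕ) :
    n ∈ castelnuovoSemigroup r d ↔ ∃ k : ℕ, k * (d - r + 1) ≤ n ∧ n ≤ k * d := by
  set a := d - r + 1 with ha
  constructor
  · intro h
    induction h using AddSubmonoid.closure_induction with
    | mem x hx => exact ⟨1, by rw [one_mul]; exact hx.1, by simpa using hx.2⟩
    | zero => exact ⟨0, by simp⟩
    | add x y _ _ hx hy =>
      obtain ⟨k1, h1, h2⟩ := hx
      obtain ⟨k2, h3, h4⟩ := hy
      exact ⟨k1 + k2, by nlinarith, by nlinarith⟩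
  · rintro ⟨k, hk1, hk2⟩
    induction k generalizing n with
    | zero => simp at hk2; simpa [hk2] using zero_mem (castelnuovoSemigroup r d)
    | succ k ih =>
      by_cases hc : n - k * a ≤ d
      · have h1 : k * a + a ≤ n := by linarith [Nat.succ_mul k a]
        have hm : n - k * a ∈ Set.Icc a d := ⟨by omega, hc⟩
        have : n = (n - k * a) + k * a := by omega
        rw [this]
        exact add_mem (AddSubmonoid.subset_closure hm)
          (ih (k * a) le_rfl (Nat.mul_le_mul_left k hle))
      · push_neg at hc
        have hd0 : d ∈ Set.Icc a d := ⟨hle, le_rfl⟩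
        have h1 : k * a ≤ n - d := by omega
        have h2 : n - d ≤ k * d := by
          have : n ≤ k * d + d := by linarith [Nat.succ_mul k d]
          omega
        have : n = d + (n - d) := by
          have : d ≤ n := by omega
          omega
        rw [this]
        exact add_mem (AddSubmonoid.subset_closure hd0) (ih _ h1 h2)

theorem castelnuovo_membership_and_gaps (r d : ℕ) (hr : 2 ≤ r) (hd : 2 * r - 1 ≤ d) :
    (∀ n : ℕ, n ∈ castelnuovoSemigroup r d ↔
      ∃ k : ℕ, k * (d - r + 1) ≤ n ∧ n ≤ k * d) ∧
    (castelnuovoSemigroup r d : Set ℕ)ᶜ =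
      ⋃ k : ℕ, {n : ℕ | k * d < n ∧ n < (k + 1) * (d - r + 1)} := by
  have hle : d - r + 1 ≤ d := by omega
  have hmem := castelnuovo_mem_iff r d hle
  refine ⟨hmem, ?_⟩
  set a := d - r + 1 with ha
  have ha1 : 1 ≤ a := by omega
  ext n
  simp only [Set.mem_compl_iff, SetLike.mem_coe, hmem, Set.mem_iUnion, Set.mem_setOf_eq]
  constructor
  · intro h
    push_neg at h
    refine ⟨n / a, ?_, ?_⟩
    · have h1 : (n / a) * a ≤ n := Nat.div_mul_le_self n a
      have := h (n / a) h1
      omega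
    · exact (Nat.div_lt_iff_lt_mul (by omega)).mp (Nat.lt_succ_self _)
  · rintro ⟨k, hk1, hk2⟩ ⟨j, hj1, hj2⟩
    rcases le_or_gt j k with h | h
    · have : j * d ≤ k * d := Nat.mul_le_mul_right d h
      omega
    · have : (k + 1) * a ≤ j * a := Nat.mul_le_mul_right a h
      omega
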